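/- arXiv:2401.00957 — 9 statements merged into one kernel-verified Lean document; each statement's English description precedes it below -/
import Mathlib

section
/- Let t ∈ ℝ and (a,b) ∈ ℍ_t. Then |a|² ≠ t·|b|² if and only if (a,b) has a two-sided inverse with respect to ·_t; in that case the inverse is (conj(a)/(|a|² − t|b|²), −b/(|a|² − t|b|²)), i.e. (a,b) ·_t (conj(a)/(|a|² − t|b|²), −b/(|a|² − t|b|²)) = (1,0) = (conj(a)/(|a|² − t|b|²), −b/(|a|² − t|b|²)) ·_t (a,b), and moreover π_t of this inverse equals the inverse of the matrix [(a,b)]_t in M₂(ℂ). -/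
noncomputable section

open ComplexConjugate

/-- The `t`-scaled vector multiplication on `ℂ × ℂ` (the ring `ℍ_t`). -/
def hmul (t : ℝ) (h₁ h₂ : ℂ × ℂ) : ℂ × ℂ :=
  (h₁.1 * h₂.1 + (t : ℂ) * h₁.2 * conj h₂.2, h₁.1 * h₂.2 + h₁.2 * conj h₂.1)

/-- The realization `π_t : ℍ_t → M₂(ℂ)`. -/
def pit (t : ℝ) (h : ℂ × ℂ) : Matrix (Fin 2) (Fin 2) ℂ :=
  !![h.1, (t : ℂ) * h.2; conj h.2, conj h.1]

/-- The hypercomplex conjugate `(a,b)† = (conj a, -b)`. -/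
def hdag (h : ℂ × ℂ) : ℂ × ℂ := (conj h.1, -h.2)

/-- The linear functional `τ((a,b)) = Re a`, composed with `·_t`-multiplication:
the bilinear form `⟨h₁,h₂⟩_t = τ(h₁ ·_t h₂†)`. -/
def hform (t : ℝ) (h₁ h₂ : ℂ × ℂ) : ℝ := (hmul t h₁ (hdag h₂)).1.re

lemma pit_mul (t : ℝ) (h₁ h₂ : ℂ × ℂ) :
    pit t (hmul t h₁ h₂) = pit t h₁ * pit t h₂ := by
  simp [pit, hmul, Matrix.mul_fin_two, map_add, map_mul]
  ring_nf
  exact ⟨trivial, trivial, trivial⟩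

lemma pit_det (t : ℝ) (h : ℂ × ℂ) :
    (pit t h).det = ((Complex.normSq h.1 - t * Complex.normSq h.2 : ℝ) : ℂ) := by
  simp [pit, Matrix.det_fin_two_of, Complex.normSq_eq_conj_mul_self]
  ring

lemma inv_lemma (t : ℝ) (a b : ℂ) (hd : Complex.normSq a ≠ t * Complex.normSq b) :
    hmul t (a, b)
        (conj a / ((Complex.normSq a - t * Complex.normSq b : ℝ) : ℂ),
          -b / ((Complex.normSq a - t * Complex.normSq b : ℝ) : ℂ)) = (1, 0) ∧
      hmul t
        (conj a / ((Complex.normSq a - t * Complex.normSq b : ℝ) : ℂ),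
          -b / ((Complex.normSq a - t * Complex.normSq b : ℝ) : ℂ)) (a, b) = (1, 0) := by
  set d : ℂ := ((Complex.normSq a - t * Complex.normSq b : ℝ) : ℂ) with hdef
  have hd' : d ≠ 0 := Complex.ofReal_ne_zero.mpr (sub_ne_zero.mpr hd)
  have hconj : conj d = d := Complex.conj_ofReal _
  have hcd : a * conj a - (t : ℂ) * (b * conj b) = d := by
    rw [Complex.mul_conj, Complex.mul_conj, hdef]; push_cast; ring
  constructor <;>
  · simp only [hmul, Prod.mk.injEq]
    constructor <;>
    · simp -failIfUnchanged only [map_div₀, map_neg, hconj, Complex.conj_conj]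
      field_simp [map_div₀, map_neg, hconj]
      first
      | linear_combination hcd
      | linear_combination -hcd
      | ring

/-- `(a,b)` is `·_t`-invertible iff `|a|² ≠ t|b|²`, with the explicit
two-sided inverse, whose realization is the matrix inverse of `[(a,b)]_t`. -/
theorem hypercomplex_invertible_iff (t : ℝ) (a b : ℂ) :
    (Complex.normSq a ≠ t * Complex.normSq b ↔
      ∃ k : ℂ × ℂ, hmul t (a, b) k = (1, 0) ∧ hmul t k (a, b) = (1, 0)) ∧
    (Complex.normSq a ≠ t * Complex.normSq b →
      hmul t (a, b)
        (conj a / ((Complex.normSq a - t * Complex.normSq b : ℝ) : ℂ),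
          -b / ((Complex.normSq a - t * Complex.normSq b : ℝ) : ℂ)) = (1, 0) ∧
      hmul t
        (conj a / ((Complex.normSq a - t * Complex.normSq b : ℝ) : ℂ),
          -b / ((Complex.normSq a - t * Complex.normSq b : ℝ) : ℂ)) (a, b) = (1, 0) ∧
      pit t
        (conj a / ((Complex.normSq a - t * Complex.normSq b : ℝ) : ℂ),
          -b / ((Complex.normSq a - t * Complex.normSq b : ℝ) : ℂ)) = (pit t (a, b))⁻¹) := by
  constructor
  · constructor
    · intro hd
      exact ⟨_, inv_lemma t a b hd⟩
    · rintro ⟨k, hk1, hk2⟩ hd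
      have h1 : pit t (hmul t k (a, b)) = pit t k * pit t (a, b) := pit_mul t k (a, b)
      rw [hk2] at h1
      have hdet := congrArg Matrix.det h1
      rw [Matrix.det_mul, pit_det, pit_det, pit_det, sub_eq_zero.mpr hd] at hdet
      simp [Complex.normSq] at hdet
  · intro hd
    obtain ⟨h1, h2⟩ := inv_lemma t a b hd
    refine ⟨h1, h2, ?_⟩
    refine (Matrix.inv_eq_left_inv ?_).symm
    rw [← pit_mul, h2]
    simp [pit, Matrix.one_fin_two]
end
end

section
/- For a real scale t, one has t < 0 if and only if every nonzero element (a,b) ∈ ℍ_t, (a,b) ≠ (0,0), has a two-sided inverse with respect to ·_t; that is, t < 0 if and only if the unital ring (ℂ², +, ·_t) is a division ring (and this division ring is noncommutative). -/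
noncomputable section

open ComplexConjugate

/-- `t < 0` iff every nonzero element of `ℍ_t` has a two-sided `·_t`-inverse
(i.e. `ℍ_t` is a division ring), and for `t < 0` the multiplication is noncommutative. -/
theorem scaled_hypercomplex_division_ring_iff (t : ℝ) :
    (t < 0 ↔ ∀ h : ℂ × ℂ, h ≠ ((0 : ℂ), (0 : ℂ)) →
      ∃ k : ℂ × ℂ, hmul t h k = (1, 0) ∧ hmul t k h = (1, 0)) ∧
    (t < 0 → ∃ h₁ h₂ : ℂ × ℂ, hmul t h₁ h₂ ≠ hmul t h₂ h₁) := by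
  constructor
  · constructor
    · intro ht h hne
      obtain ⟨a, b⟩ := h
      set N : ℝ := Complex.normSq a - t * Complex.normSq b with hN
      have hNpos : 0 < N := by
        rw [hN]
        rcases eq_or_ne b 0 with hb | hb
        · have ha : a ≠ 0 := by rintro rfl; exact hne (by simp [hb])
          have h1 : 0 < Complex.normSq a := Complex.normSq_pos.mpr ha
          have h2 : 0 ≤ -t * Complex.normSq b :=
            mul_nonneg (by linarith) (Complex.normSq_nonneg b)
          nlinarith
        · have h1 : 0 < Complex.normSq b := Complex.normSq_pos.mpr hb
          have h2 := Complex.normSq_nonneg a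
          nlinarith
      have hNne : (N : ℂ) ≠ 0 := by exact_mod_cast hNpos.ne'
      have hA : a * conj a = (Complex.normSq a : ℂ) := Complex.mul_conj a
      have hB : b * conj b = (Complex.normSq b : ℂ) := Complex.mul_conj b
      refine ⟨((N : ℂ)⁻¹ * conj a, (N : ℂ)⁻¹ * (-b)), ?_, ?_⟩ <;>
        · simp only [hmul, Prod.mk.injEq, map_mul, map_neg, map_inv₀, Complex.conj_ofReal,
            Complex.conj_conj]
          constructor
          · field_simp
            push_cast [hN]
            linear_combination hA - (t : ℂ) * hB
          · field_simp
            ring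
    · intro H
      by_contra ht
      push_neg at ht
      obtain ⟨⟨c, d⟩, h1, _⟩ := H ((Real.sqrt t : ℂ), 1) (by simp [Prod.ext_iff])
      simp only [hmul, Prod.mk.injEq, map_one, mul_one, one_mul] at h1
      obtain ⟨e1, e2⟩ := h1
      have hc : c = -(Real.sqrt t : ℂ) * conj d := by
        have := congrArg conj e2
        simp only [map_add, map_mul, Complex.conj_conj, Complex.conj_ofReal, map_zero] at this
        linear_combination this
      rw [hc] at e1
      have hst : (Real.sqrt t : ℂ) * (Real.sqrt t : ℂ) = (t : ℂ) := by
        norm_cast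
        exact Real.mul_self_sqrt ht
      have : (0 : ℂ) = 1 := by linear_combination e1 + conj d * hst
      exact one_ne_zero this.symm
  · intro _
    refine ⟨(0, 1), (Complex.I, 0), ?_⟩
    norm_num [hmul, Prod.ext_iff, Complex.ext_iff]
end
end

section
/- Let t ∈ ℝ and (a,b) ∈ ℍ_t with a = x + y·i (x, y ∈ ℝ). Then the set of eigenvalues of the matrix [(a,b)]_t (the set of z ∈ ℂ with det([(a,b)]_t − z·I₂) = 0) is: {x} if y² = t·|b|²; {x + √(t·|b|² − y²), x − √(t·|b|² − y²)} (a subset of ℝ) if y² < t·|b|²; and {x + i·√(y² − t·|b|²), x − i·√(y² − t·|b|²)} (a subset of ℂ \ ℝ when y² > t|b|²) if y² > t·|b|². -/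
noncomputable section

open ComplexConjugate

/-- the eigenvalues of `[(a,b)]_t`, for `a = x + y i`, according to the
sign of `y² − t|b|²`. -/
theorem spectrum_of_realization (t x y : ℝ) (b : ℂ) (a : ℂ) (ha : a = (x : ℂ) + (y : ℂ) * Complex.I) :
    (y ^ 2 = t * Complex.normSq b →
      {z : ℂ | Matrix.det (pit t (a, b) - z • (1 : Matrix (Fin 2) (Fin 2) ℂ)) = 0} =
        {((x : ℝ) : ℂ)}) ∧
    (y ^ 2 < t * Complex.normSq b →
      {z : ℂ | Matrix.det (pit t (a, b) - z • (1 : Matrix (Fin 2) (Fin 2) ℂ)) = 0} =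
        {((x + Real.sqrt (t * Complex.normSq b - y ^ 2) : ℝ) : ℂ),
         ((x - Real.sqrt (t * Complex.normSq b - y ^ 2) : ℝ) : ℂ)} ∧
      ∀ z ∈ {z : ℂ | Matrix.det (pit t (a, b) - z • (1 : Matrix (Fin 2) (Fin 2) ℂ)) = 0},
        z.im = 0) ∧
    (y ^ 2 > t * Complex.normSq b →
      {z : ℂ | Matrix.det (pit t (a, b) - z • (1 : Matrix (Fin 2) (Fin 2) ℂ)) = 0} =
        {(x : ℂ) + Complex.I * ((Real.sqrt (y ^ 2 - t * Complex.normSq b) : ℝ) : ℂ),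
         (x : ℂ) - Complex.I * ((Real.sqrt (y ^ 2 - t * Complex.normSq b) : ℝ) : ℂ)} ∧
      ∀ z ∈ {z : ℂ | Matrix.det (pit t (a, b) - z • (1 : Matrix (Fin 2) (Fin 2) ℂ)) = 0},
        z.im ≠ 0) := by

  subst ha
  have key : ∀ z : ℂ, Matrix.det (pit t ((x:ℂ) + (y:ℂ)*Complex.I, b) - z • (1 : Matrix (Fin 2) (Fin 2) ℂ)) =
      (z - x)^2 + ((y^2 - t * Complex.normSq b : ℝ) : ℂ) := by
    intro z
    simp [pit, Matrix.det_fin_two, Matrix.one_apply]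
    linear_combination (-(y:ℂ)^2) * Complex.I_sq - (t:ℂ) * Complex.mul_conj b
  refine ⟨?_, ?_, ?_⟩
  · intro h
    ext z
    simp only [Set.mem_setOf_eq, key, Set.mem_singleton_iff, h]
    simp [sub_eq_zero, pow_eq_zero_iff]
  · intro h
    set s := Real.sqrt (t * Complex.normSq b - y ^ 2) with hs
    have hs2 : s^2 = t * Complex.normSq b - y^2 := Real.sq_sqrt (by linarith)
    have hspos : 0 < s := Real.sqrt_pos.mpr (by linarith)
    have factor : ∀ z : ℂ, (z - x)^2 + ((y^2 - t * Complex.normSq b : ℝ) : ℂ) =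
        (z - ((x + s : ℝ) : ℂ)) * (z - ((x - s : ℝ) : ℂ)) := by
      intro z
      have : ((y^2 - t * Complex.normSq b : ℝ) : ℂ) = -((s:ℂ))^2 := by
        rw [← Complex.ofReal_pow, hs2]; push_cast; ring
      rw [this]; push_cast; ring
    have hset : ∀ z : ℂ, Matrix.det (pit t ((x:ℂ) + (y:ℂ)*Complex.I, b) - z • (1 : Matrix (Fin 2) (Fin 2) ℂ)) = 0 ↔
        z = ((x + s : ℝ) : ℂ) ∨ z = ((x - s : ℝ) : ℂ) := by
      intro z
      rw [key, factor, mul_eq_zero, sub_eq_zero, sub_eq_zero]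
    constructor
    · ext z
      simp only [Set.mem_setOf_eq, hset, Set.mem_insert_iff, Set.mem_singleton_iff]
    · intro z hz
      rcases (hset z).mp hz with h1 | h1 <;> simp [h1]
  · intro h
    set s := Real.sqrt (y ^ 2 - t * Complex.normSq b) with hs
    have hs2 : s^2 = y^2 - t * Complex.normSq b := Real.sq_sqrt (by linarith)
    have hspos : 0 < s := Real.sqrt_pos.mpr (by linarith)
    have factor : ∀ z : ℂ, (z - x)^2 + ((y^2 - t * Complex.normSq b : ℝ) : ℂ) =
        (z - ((x:ℂ) + Complex.I * (s:ℂ))) * (z - ((x:ℂ) - Complex.I * (s:ℂ))) := by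
      intro z
      have h1 : ((y^2 - t * Complex.normSq b : ℝ) : ℂ) = ((s:ℂ))^2 := by
        rw [← Complex.ofReal_pow, hs2]
      rw [h1]
      linear_combination ((s:ℂ)^2) * Complex.I_sq
    have hset : ∀ z : ℂ, Matrix.det (pit t ((x:ℂ) + (y:ℂ)*Complex.I, b) - z • (1 : Matrix (Fin 2) (Fin 2) ℂ)) = 0 ↔
        z = ((x:ℂ) + Complex.I * (s:ℂ)) ∨ z = ((x:ℂ) - Complex.I * (s:ℂ)) := by
      intro z
      rw [key, factor, mul_eq_zero, sub_eq_zero, sub_eq_zero]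
    constructor
    · ext z
      simp only [Set.mem_setOf_eq, hset, Set.mem_insert_iff, Set.mem_singleton_iff]
    · intro z hz
      rcases (hset z).mp hz with h1 | h1 <;>
        simp [h1, Complex.add_im, Complex.sub_im, Complex.mul_im, hspos.ne']
end
end

section
/- Let t < 0 be a real scale and let h = (a,b) ∈ ℍ_t with a = x + y·i (x, y ∈ ℝ). Then there exists an invertible element q ∈ ℍ_t (i.e. q has a two-sided ·_t-inverse) such that q⁻¹ ·_t h ·_t q = (x + i·√(y² − t·|b|²), 0) in ℍ_t; that is, every t-scaled hypercomplex number is similar in ℍ_t to the element (σ_t(h), 0) built from its t-spectral value. -/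
noncomputable section

open ComplexConjugate

/-- for `t < 0`, every `h = (a,b) ∈ ℍ_t` with `a = x + y i` is similar
in `ℍ_t` to `(σ_t(h), 0) = (x + i √(y² − t|b|²), 0)`. -/
theorem similar_to_spectral_form_of_neg (t : ℝ) (ht : t < 0) (x y : ℝ) (b : ℂ) :
    ∃ q qinv : ℂ × ℂ,
      hmul t q qinv = (1, 0) ∧ hmul t qinv q = (1, 0) ∧
      hmul t (hmul t qinv ((x : ℂ) + (y : ℂ) * Complex.I, b)) q =
        ((x : ℂ) + Complex.I * ((Real.sqrt (y ^ 2 - t * Complex.normSq b) : ℝ) : ℂ), 0) := by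
  set s : ℝ := Real.sqrt (y ^ 2 - t * Complex.normSq b) with hs_def
  have hnn : 0 ≤ y ^ 2 - t * Complex.normSq b := by
    nlinarith [Complex.normSq_nonneg b, sq_nonneg y]
  have hs2 : s ^ 2 = y ^ 2 - t * Complex.normSq b := Real.sq_sqrt hnn
  have hsnn : 0 ≤ s := Real.sqrt_nonneg _
  have hb : (b : ℂ) * conj b = (Complex.normSq b : ℂ) := Complex.mul_conj b
  have hs2c : ((s:ℂ))^2 = (y:ℂ)^2 - (t:ℂ) * (Complex.normSq b : ℂ) := by
    exact_mod_cast congrArg (fun r : ℝ => (r:ℂ)) hs2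
  by_cases hcase : b = 0 ∧ y ≤ 0
  · obtain ⟨hb0, hy⟩ := hcase
    have hsy : s = -y := by
      rw [hs_def, hb0]; simp [Real.sqrt_sq_eq_abs, abs_of_nonpos hy]
    have htne : (t:ℂ) ≠ 0 := by exact_mod_cast ht.ne
    exact ⟨(0, 1), (0, (t : ℂ)⁻¹), by simp [hmul, htne],
      by simp [hmul, htne], by simp [hmul, hb0, hsy, htne, mul_comm]⟩
  · have hsy : 0 < s + y := by
      rcases (not_and_or.mp hcase) with hb0 | hy
      · have hbn : 0 < Complex.normSq b := Complex.normSq_pos.mpr hb0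
        nlinarith [abs_nonneg y, sq_abs y, neg_abs_le y]
      · push_neg at hy; nlinarith
    have hN : (0:ℝ) < (s + y) ^ 2 - t * Complex.normSq b := by
      nlinarith [Complex.normSq_nonneg b]
    set N : ℝ := (s + y) ^ 2 - t * Complex.normSq b with hN_def
    have hNC : ((N:ℝ):ℂ) ≠ 0 := by exact_mod_cast hN.ne'
    have hNc : ((N:ℝ):ℂ) = ((s:ℂ) + y)^2 - (t:ℂ) * (Complex.normSq b : ℂ) := by
      rw [hN_def]; push_cast; ring
    refine ⟨(((s+y : ℝ) : ℂ), Complex.I * b),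
            ((((s+y)/N : ℝ) : ℂ), -(Complex.I * b) / (N : ℂ)), ?_, ?_, ?_⟩ <;>
      simp only [hmul, Prod.mk.injEq, map_div₀, map_neg, map_mul, map_add, Complex.conj_I,
        Complex.conj_ofReal] <;> push_cast <;> constructor <;> field_simp
    · linear_combination -hNc + (t:ℂ) * b * (conj b) * Complex.I_sq - (t:ℂ) * hb
    · ring
    · linear_combination -hNc + (t:ℂ) * b * (conj b) * Complex.I_sq - (t:ℂ) * hb
    · ring
    · linear_combination
        (-2*(t:ℂ)*Complex.I*((s:ℂ)+y) + (t:ℂ)*x*Complex.I^2 - (t:ℂ)*y*Complex.I^3) * hb +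
        (-Complex.I*((s:ℂ)+y)) * hs2c +
        ((t:ℂ)*(x:ℂ)*(Complex.normSq b:ℂ) - (t:ℂ)*y*(Complex.normSq b:ℂ)*Complex.I) *
          Complex.I_sq +
        (-(x:ℂ) - Complex.I*(s:ℂ)) * hNc
    · linear_combination
        (2*(y:ℂ)*b*((s:ℂ)+y) - (t:ℂ)*b^2*(conj b)) * Complex.I_sq + (t:ℂ)*b*hb + b*hs2c
end
end

section
/- Let t < 0 be a real scale and let ξ, η ∈ ℍ_t. If σ_t(ξ) = σ_t(η) in ℂ (ξ and η are t-spectral related), then ξ and η are similar in ℍ_t: there exists an invertible q ∈ ℍ_t with η = q⁻¹ ·_t ξ ·_t q. -/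
noncomputable section

open ComplexConjugate

/-- The `t`-spectralization `σ_t : ℍ_t → ℂ`. -/
def sigmaT (t : ℝ) (h : ℂ × ℂ) : ℂ :=
  if h.2 = 0 then h.1
  else (h.1.re : ℂ) + Complex.I * ((Real.sqrt (h.1.im ^ 2 - t * Complex.normSq h.2) : ℝ) : ℂ)

lemma hmul_assoc (t : ℝ) (a b c : ℂ × ℂ) :
    hmul t (hmul t a b) c = hmul t a (hmul t b c) := by
  simp only [hmul, Prod.mk.injEq, map_add, map_mul, Complex.conj_conj, Complex.conj_ofReal]
  constructor <;> ring

lemma one_hmul (t : ℝ) (a : ℂ × ℂ) : hmul t (1, 0) a = a := by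
  simp [hmul]

lemma hmul_one (t : ℝ) (a : ℂ × ℂ) : hmul t a (1, 0) = a := by
  simp [hmul]

lemma hmul_inv (t : ℝ) (ht : t < 0) (q : ℂ × ℂ) (hq : q ≠ 0) :
    ∃ qinv, hmul t q qinv = (1,0) ∧ hmul t qinv q = (1,0) := by
  set n : ℝ := Complex.normSq q.1 - t * Complex.normSq q.2 with hn_def
  have hn : 0 < n := by
    rcases (Prod.mk.injEq .. ▸ (by simpa [Prod.ext_iff] using hq) : ¬(q.1 = 0 ∧ q.2 = 0)) with h
    have h1 := Complex.normSq_nonneg q.1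
    have h2 := Complex.normSq_nonneg q.2
    by_contra hcon
    push_neg at hcon
    have e1 : Complex.normSq q.1 = 0 := by nlinarith
    have e2 : Complex.normSq q.2 = 0 := by nlinarith
    exact h ⟨Complex.normSq_eq_zero.mp e1, Complex.normSq_eq_zero.mp e2⟩
  have hn0 : (n : ℂ) ≠ 0 := by exact_mod_cast hn.ne'
  refine ⟨(conj q.1 / n, -q.2 / n), ?_, ?_⟩ <;>
  · simp only [hmul, Prod.mk.injEq, map_div₀, map_neg, Complex.conj_conj, Complex.conj_ofReal]
    constructor
    · field_simp
      push_cast [hn_def]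
      linear_combination Complex.mul_conj q.1 - (t:ℂ) * Complex.mul_conj q.2
    · field_simp
      ring

lemma similar_core (t : ℝ) (ht : t < 0) (ξ η : ℂ × ℂ)
    (hre : ξ.1.re = η.1.re)
    (hN : ξ.1.im ^ 2 - t * Complex.normSq ξ.2 = η.1.im ^ 2 - t * Complex.normSq η.2) :
    ∃ q : ℂ × ℂ, q ≠ 0 ∧ hmul t ξ q = hmul t q η := by
  have h1 : ξ.1 + conj ξ.1 = η.1 + conj η.1 := by
    rw [Complex.add_conj, Complex.add_conj, hre]
  have h2 : ξ.1 * conj ξ.1 - (t : ℂ) * (ξ.2 * conj ξ.2)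
      = η.1 * conj η.1 - (t : ℂ) * (η.2 * conj η.2) := by
    rw [Complex.mul_conj, Complex.mul_conj, Complex.mul_conj, Complex.mul_conj]
    have : Complex.normSq ξ.1 - t * Complex.normSq ξ.2
        = Complex.normSq η.1 - t * Complex.normSq η.2 := by
      have e1 : Complex.normSq ξ.1 = ξ.1.re ^ 2 + ξ.1.im ^ 2 := by
        rw [Complex.normSq_apply]; ring
      have e2 : Complex.normSq η.1 = η.1.re ^ 2 + η.1.im ^ 2 := by
        rw [Complex.normSq_apply]; ring
      linear_combination e1 - e2 + hN + (ξ.1.re + η.1.re) * hre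
    exact_mod_cast congrArg Complex.ofReal this
  by_cases hq0 : (ξ.1 + η.1 - (ξ.1 + conj ξ.1), ξ.2 + η.2) = (0 : ℂ × ℂ)
  · -- degenerate case: η = (conj ξ.1, -ξ.2)
    rw [Prod.ext_iff] at hq0
    simp only [Prod.fst_zero, Prod.snd_zero] at hq0
    have hη1 : η.1 = conj ξ.1 := by
      have := hq0.1; linear_combination this
    have hη2 : η.2 = -ξ.2 := by
      have := hq0.2; linear_combination this
    by_cases hb : ξ.2 = 0
    · refine ⟨((0 : ℂ), 1), by simp [Prod.ext_iff], ?_⟩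
      simp [hmul, Prod.ext_iff, hη1, hη2, hb]
    · refine ⟨((0 : ℂ), Complex.I * ξ.2), ?_, ?_⟩
      · simp [Prod.ext_iff, hb, Complex.I_ne_zero]
      · simp only [hmul, Prod.ext_iff, hη1, hη2, map_mul, map_neg, map_zero,
          Complex.conj_conj, Complex.conj_I, mul_zero, zero_mul, add_zero, zero_add]
        constructor <;> ring
  · refine ⟨(ξ.1 + η.1 - (ξ.1 + conj ξ.1), ξ.2 + η.2), hq0, ?_⟩
    simp only [hmul, Prod.ext_iff, map_add, map_sub, Complex.conj_conj]
    constructor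
    · linear_combination η.1 * h1 - h2
    · linear_combination η.2 * h1



/-- for `t < 0`, `t`-spectral related elements of `ℍ_t` are similar. -/
theorem spectral_related_implies_similar (t : ℝ) (ht : t < 0) (ξ η : ℂ × ℂ)
    (hrel : sigmaT t ξ = sigmaT t η) :
    ∃ q qinv : ℂ × ℂ,
      hmul t q qinv = (1, 0) ∧ hmul t qinv q = (1, 0) ∧
      hmul t (hmul t qinv ξ) q = η := by
  have hNnn : ∀ z : ℂ × ℂ, 0 ≤ z.1.im ^ 2 - t * Complex.normSq z.2 := fun z => by
    nlinarith [Complex.normSq_nonneg z.2, sq_nonneg z.1.im]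
  have key : ξ.1.re = η.1.re ∧
      ξ.1.im ^ 2 - t * Complex.normSq ξ.2 = η.1.im ^ 2 - t * Complex.normSq η.2 := by
    unfold sigmaT at hrel
    by_cases hb : ξ.2 = 0 <;> by_cases hd : η.2 = 0
    · simp only [hb, hd, eq_self_iff_true, if_true] at hrel
      refine ⟨by rw [hrel], by rw [hrel, hb, hd]⟩
    · simp only [hb, hd, eq_self_iff_true, if_true, if_neg hd] at hrel
      have hr : ξ.1.re = η.1.re := by
        have := congrArg Complex.re hrel; simpa using this
      have hi : ξ.1.im = Real.sqrt (η.1.im ^ 2 - t * Complex.normSq η.2) := by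
        have := congrArg Complex.im hrel; simpa using this
      refine ⟨hr, ?_⟩
      rw [hb]
      simp only [Complex.normSq_zero, mul_zero, sub_zero, hi,
        Real.sq_sqrt (hNnn η)]
    · simp only [hb, hd, if_neg hb, eq_self_iff_true, if_true] at hrel
      have hr : ξ.1.re = η.1.re := by
        have := congrArg Complex.re hrel; simpa using this
      have hi : Real.sqrt (ξ.1.im ^ 2 - t * Complex.normSq ξ.2) = η.1.im := by
        have := congrArg Complex.im hrel; simpa using this
      refine ⟨hr, ?_⟩
      rw [hd]
      simp only [Complex.normSq_zero, mul_zero, sub_zero, ← hi,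
        Real.sq_sqrt (hNnn ξ)]
    · simp only [if_neg hb, if_neg hd] at hrel
      have hr : ξ.1.re = η.1.re := by
        have := congrArg Complex.re hrel; simpa using this
      have hi : Real.sqrt (ξ.1.im ^ 2 - t * Complex.normSq ξ.2)
          = Real.sqrt (η.1.im ^ 2 - t * Complex.normSq η.2) := by
        have := congrArg Complex.im hrel; simpa using this
      refine ⟨hr, ?_⟩
      have := congrArg (fun x : ℝ => x ^ 2) hi
      simpa [Real.sq_sqrt (hNnn ξ), Real.sq_sqrt (hNnn η)] using this
  obtain ⟨q, hq0, hq⟩ := similar_core t ht ξ η key.1 key.2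
  obtain ⟨qinv, hinv1, hinv2⟩ := hmul_inv t ht q hq0
  exact ⟨q, qinv, hinv1, hinv2, by
    rw [hmul_assoc, hq, ← hmul_assoc, hinv2, one_hmul]⟩
end
end

section
/- If t < 0 is a real scale, then the bilinear form ⟨·,·⟩_t is a (positive-definite) real inner product on ℍ_t: it is ℝ-bilinear, symmetric, satisfies ⟨h, h⟩_t ≥ 0 for all h ∈ ℍ_t, and ⟨h, h⟩_t = 0 if and only if h = (0,0). -/
noncomputable section

open ComplexConjugate

lemma hform_eq (t : ℝ) (h₁ h₂ : ℂ × ℂ) :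
    hform t h₁ h₂ = (h₁.1.re * h₂.1.re + h₁.1.im * h₂.1.im)
      - t * (h₁.2.re * h₂.2.re + h₁.2.im * h₂.2.im) := by
  simp [hform, hmul, hdag, Complex.mul_re, Complex.conj_re, Complex.conj_im]
  ring

/-- for `t < 0`, `⟨·,·⟩_t` is a positive-definite real inner product
on `ℍ_t`: bilinear, symmetric, nonnegative, and definite. -/
theorem form_is_inner_product_of_neg (t : ℝ) (ht : t < 0) :
    (∀ h₁ h₂ h₃ : ℂ × ℂ, hform t (h₁ + h₂) h₃ = hform t h₁ h₃ + hform t h₂ h₃) ∧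
    (∀ h₁ h₂ h₃ : ℂ × ℂ, hform t h₁ (h₂ + h₃) = hform t h₁ h₂ + hform t h₁ h₃) ∧
    (∀ (r : ℝ) (h₁ h₂ : ℂ × ℂ), hform t (r • h₁) h₂ = r * hform t h₁ h₂) ∧
    (∀ (r : ℝ) (h₁ h₂ : ℂ × ℂ), hform t h₁ (r • h₂) = r * hform t h₁ h₂) ∧
    (∀ h₁ h₂ : ℂ × ℂ, hform t h₁ h₂ = hform t h₂ h₁) ∧
    (∀ h : ℂ × ℂ, 0 ≤ hform t h h) ∧
    (∀ h : ℂ × ℂ, hform t h h = 0 ↔ h = ((0 : ℂ), (0 : ℂ))) := by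
  have key : ∀ h : ℂ × ℂ, hform t h h =
      (h.1.re ^ 2 + h.1.im ^ 2) + (-t) * (h.2.re ^ 2 + h.2.im ^ 2) := by
    intro h; rw [hform_eq]; ring
  refine ⟨?_, ?_, ?_, ?_, ?_, ?_, ?_⟩
  · intro h₁ h₂ h₃; simp [hform_eq]; ring
  · intro h₁ h₂ h₃; simp [hform_eq]; ring
  · intro r h₁ h₂; simp [hform_eq, Complex.smul_re, Complex.smul_im]; ring
  · intro r h₁ h₂; simp [hform_eq, Complex.smul_re, Complex.smul_im]; ring
  · intro h₁ h₂; simp [hform_eq]; ring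
  · intro h
    rw [key]
    have hnt : 0 < -t := neg_pos.mpr ht
    positivity
  · intro h
    rw [key]
    constructor
    · intro h0
      have h1 : h.1.re ^ 2 + h.1.im ^ 2 = 0 ∧ (-t) * (h.2.re ^ 2 + h.2.im ^ 2) = 0 := by
        constructor <;> nlinarith [sq_nonneg h.1.re, sq_nonneg h.1.im, sq_nonneg h.2.re, sq_nonneg h.2.im, mul_nonneg (le_of_lt (neg_pos.mpr ht)) (add_nonneg (sq_nonneg h.2.re) (sq_nonneg h.2.im))]
      obtain ⟨ha, hb⟩ := h1
      have hb' : h.2.re ^ 2 + h.2.im ^ 2 = 0 := by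
        have hnt : (-t) ≠ 0 := ne_of_gt (neg_pos.mpr ht)
        exact (mul_eq_zero.mp hb).resolve_left hnt
      have : h.1 = 0 := by
        apply Complex.ext <;> simp only [Complex.zero_re, Complex.zero_im] <;> nlinarith [sq_nonneg h.1.re, sq_nonneg h.1.im]
      have h2 : h.2 = 0 := by
        apply Complex.ext <;> simp only [Complex.zero_re, Complex.zero_im] <;> nlinarith [sq_nonneg h.2.re, sq_nonneg h.2.im]
      exact Prod.ext this h2
    · intro h0; rw [h0]; simp
end
end

section
/- For every real scale t, an element h = (a,b) ∈ ℍ_t satisfies h^† ·_t h = (1,0) (the multiplication operator M_h is an isometry) if and only if h^† ·_t h = (1,0) = h ·_t h^† (M_h is a unitary), if and only if |a|² − t·|b|² = 1, i.e. det([h]_t) = 1. -/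
noncomputable section

open ComplexConjugate

/-- `M_h` is an isometry iff it is unitary iff `|a|² − t|b|² = 1`,
i.e. `det([h]_t) = 1`. -/
theorem isometry_iff_unitary_iff_det_one (t : ℝ) (a b : ℂ) :
    (hmul t (hdag (a, b)) (a, b) = (1, 0) ↔
      hmul t (hdag (a, b)) (a, b) = (1, 0) ∧ hmul t (a, b) (hdag (a, b)) = (1, 0)) ∧
    (hmul t (hdag (a, b)) (a, b) = (1, 0) ↔
      Complex.normSq a - t * Complex.normSq b = 1) ∧
    (hmul t (hdag (a, b)) (a, b) = (1, 0) ↔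
      Matrix.det (pit t (a, b)) = 1) := by
  have ha : (starRingEnd ℂ) a * a = (Complex.normSq a : ℂ) := by
    rw [mul_comm, Complex.mul_conj]
  have hb : (starRingEnd ℂ) b * b = (Complex.normSq b : ℂ) := by
    rw [mul_comm, Complex.mul_conj]
  have hcast : ((Complex.normSq a : ℂ) - (t : ℂ) * (Complex.normSq b : ℂ) = 1) ↔
      Complex.normSq a - t * Complex.normSq b = 1 := by
    constructor
    · intro h; exact_mod_cast h
    · intro h; exact_mod_cast h
  have key : hmul t (hdag (a, b)) (a, b) = (1, 0) ↔
      Complex.normSq a - t * Complex.normSq b = 1 := by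
    rw [show hmul t (hdag (a, b)) (a, b)
        = ((Complex.normSq a : ℂ) - (t : ℂ) * (Complex.normSq b : ℂ), 0) by
      simp only [hmul, hdag]
      refine Prod.ext ?_ ?_
      · show (starRingEnd ℂ) a * a + (t : ℂ) * -b * (starRingEnd ℂ) b = _
        rw [ha]; rw [show (t : ℂ) * -b * (starRingEnd ℂ) b = -((t:ℂ) * ((starRingEnd ℂ) b * b)) by ring, hb]; ring
      · show (starRingEnd ℂ) a * b + -b * (starRingEnd ℂ) a = 0
        ring]
    rw [Prod.ext_iff]
    simpa using hcast
  refine ⟨?_, key, ?_⟩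
  · constructor
    · intro h
      refine ⟨h, ?_⟩
      have hd := hcast.mpr (key.mp h)
      simp only [hmul, hdag]
      refine Prod.ext ?_ ?_
      · show a * (starRingEnd ℂ) a + (t : ℂ) * b * (starRingEnd ℂ) (-b) = _
        rw [Complex.mul_conj]
        rw [show (t : ℂ) * b * (starRingEnd ℂ) (-b) = -((t:ℂ) * (b * (starRingEnd ℂ) b)) by simp; ring, Complex.mul_conj]
        simpa [sub_eq_add_neg] using hd
      · show a * -b + b * (starRingEnd ℂ) ((starRingEnd ℂ) a) = _
        simp; ring
    · exact fun h => h.1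
  · rw [key, ← hcast]
    simp only [pit, Matrix.det_fin_two_of]
    rw [show (t : ℂ) * b * (starRingEnd ℂ) b = (t:ℂ) * ((starRingEnd ℂ) b * b) by ring, hb,
      Complex.mul_conj]
end
end

section
/- Let t > 0 and θ ∈ ℝ, and let J_t ∈ M₂(ℝ) be the matrix with rows (0, t) and (1, 0) (the realization of the hyperbolic imaginary unit j_t, which satisfies J_t² = t·I₂). Then the matrix exponential satisfies exp(θ·J_t) = cosh(√t·θ)·I₂ + (sinh(√t·θ)/√t)·J_t, i.e. exp(θ·J_t) is the matrix with rows (cosh(√t·θ), √t·sinh(√t·θ)) and (sinh(√t·θ)/√t, cosh(√t·θ)); equivalently e^{j_tθ} = (cosh(√t·θ), sinh(√t·θ)/√t) in 𝔻_t. Moreover det(exp(θ·J_t)) = cosh²(√t·θ) − sinh²(√t·θ) = 1, so ‖e^{j_tθ}‖_t = 1, i.e. e^{j_tθ} lies in the unit subset 𝕋_t. -/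
noncomputable section

open ComplexConjugate

/-- for `t > 0`, with `J_t = !![0, t; 1, 0]` (so `J_t² = t·I₂`), the
matrix exponential satisfies
`exp(θ J_t) = cosh(√t θ)·I₂ + (sinh(√t θ)/√t)·J_t`, explicitly the matrix with rows
`(cosh(√t θ), √t sinh(√t θ))` and `(sinh(√t θ)/√t, cosh(√t θ))`; its determinant is
`cosh² − sinh² = 1`, so `e^{j_tθ} = (cosh(√t θ), sinh(√t θ)/√t)` lies in `𝕋_t`. -/
theorem exp_jt_of_pos (t θ : ℝ) (ht : 0 < t) (Jt : Matrix (Fin 2) (Fin 2) ℝ)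
    (hJ : Jt = !![0, t; 1, 0]) :
    Jt ^ 2 = t • (1 : Matrix (Fin 2) (Fin 2) ℝ) ∧
    NormedSpace.exp (θ • Jt) =
      Real.cosh (Real.sqrt t * θ) • (1 : Matrix (Fin 2) (Fin 2) ℝ) +
        (Real.sinh (Real.sqrt t * θ) / Real.sqrt t) • Jt ∧
    NormedSpace.exp (θ • Jt) =
      !![Real.cosh (Real.sqrt t * θ), Real.sqrt t * Real.sinh (Real.sqrt t * θ);
         Real.sinh (Real.sqrt t * θ) / Real.sqrt t, Real.cosh (Real.sqrt t * θ)] ∧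
    Matrix.det (NormedSpace.exp (θ • Jt)) = 1 ∧
    Real.cosh (Real.sqrt t * θ) ^ 2 - Real.sinh (Real.sqrt t * θ) ^ 2 = 1 ∧
    Real.sqrt |Real.cosh (Real.sqrt t * θ) ^ 2 -
        t * (Real.sinh (Real.sqrt t * θ) / Real.sqrt t) ^ 2| = 1 := by
  subst hJ
  set s := Real.sqrt t with hs
  have hs0 : 0 < s := Real.sqrt_pos.mpr ht
  have hs2 : s * s = t := Real.mul_self_sqrt ht.le
  have hsq : (!![0, t; 1, 0] : Matrix (Fin 2) (Fin 2) ℝ) ^ 2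
      = t • (1 : Matrix (Fin 2) (Fin 2) ℝ) := by
    rw [pow_two]
    ext i j
    fin_cases i <;> fin_cases j <;>
      simp [Matrix.mul_apply, Fin.sum_univ_succ, Matrix.one_apply]
  have hmain : NormedSpace.exp (θ • (!![0, t; 1, 0] : Matrix (Fin 2) (Fin 2) ℝ)) =
      !![Real.cosh (s * θ), s * Real.sinh (s * θ);
         Real.sinh (s * θ) / s, Real.cosh (s * θ)] := by
    set P : Matrix (Fin 2) (Fin 2) ℝ := !![s, -s; 1, 1] with hP
    set Q : Matrix (Fin 2) (Fin 2) ℝ := !![1/(2*s), 1/2; -(1/(2*s)), 1/2] with hQ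
    have hPQ : P * Q = 1 := by
      rw [hP, hQ]
      ext i j
      fin_cases i <;> fin_cases j <;>
        simp [Matrix.mul_apply, Fin.sum_univ_succ] <;> field_simp <;> ring
    have hQP : Q * P = 1 := by
      rw [hP, hQ]
      ext i j
      fin_cases i <;> fin_cases j <;>
        simp [Matrix.mul_apply, Fin.sum_univ_succ] <;> field_simp <;> ring
    have hU : IsUnit P := ⟨⟨P, Q, hPQ, hQP⟩, rfl⟩
    have hPinv : P⁻¹ = Q := Matrix.inv_eq_right_inv hPQ
    have hD : Matrix.diagonal ![s*θ, -(s*θ)] = !![s*θ, 0; 0, -(s*θ)] := by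
      ext i j
      fin_cases i <;> fin_cases j <;> simp [Matrix.diagonal_apply]
    have hdecomp : θ • (!![0, t; 1, 0] : Matrix (Fin 2) (Fin 2) ℝ)
        = P * Matrix.diagonal ![s*θ, -(s*θ)] * P⁻¹ := by
      rw [hD, hPinv, hP, hQ]
      ext i j
      fin_cases i <;> fin_cases j <;>
        simp [Matrix.mul_apply, Fin.sum_univ_succ, ← hs2] <;> field_simp <;> ring
    rw [hdecomp, Matrix.exp_conj P _ hU, Matrix.exp_diagonal, hPinv]
    have hexp : Matrix.diagonal (NormedSpace.exp ![s*θ, -(s*θ)])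
        = !![Real.exp (s*θ), 0; 0, Real.exp (-(s*θ))] := by
      ext i j
      fin_cases i <;> fin_cases j <;>
        simp [Matrix.diagonal_apply, Pi.exp_def, ← Real.exp_eq_exp_ℝ]
    rw [hexp, hP, hQ]
    ext i j
    fin_cases i <;> fin_cases j <;>
      simp [Matrix.mul_apply, Fin.sum_univ_succ, Real.cosh_eq, Real.sinh_eq] <;>
      field_simp <;> ring
  have hcs : Real.cosh (s * θ) ^ 2 - Real.sinh (s * θ) ^ 2 = 1 :=
    Real.cosh_sq_sub_sinh_sq (s * θ)
  refine ⟨hsq, ?_, hmain, ?_, hcs, ?_⟩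
  · rw [hmain]
    ext i j
    fin_cases i <;> fin_cases j <;>
      simp [Matrix.one_apply] <;> field_simp [← hs2] <;> linear_combination (Real.sinh (s * θ)) * hs2
  · rw [hmain, Matrix.det_fin_two_of]
    field_simp
    linear_combination hcs
  · have : t * (Real.sinh (s * θ) / s) ^ 2 = Real.sinh (s * θ) ^ 2 := by
      rw [← hs2]; field_simp
    rw [this, hcs]
    simp
end
end

section
/- Let t < 0 and θ ∈ ℝ, and let J_t ∈ M₂(ℝ) be the matrix with rows (0, t) and (1, 0) (the realization of the hyperbolic imaginary unit j_t, which satisfies J_t² = t·I₂). Then the matrix exponential satisfies exp(θ·J_t) = cos(√|t|·θ)·I₂ + (sin(√|t|·θ)/√|t|)·J_t, i.e. exp(θ·J_t) is the matrix with rows (cos(√|t|·θ), −√|t|·sin(√|t|·θ)) and (sin(√|t|·θ)/√|t|, cos(√|t|·θ)); equivalently e^{j_tθ} = (cos(√|t|·θ), sin(√|t|·θ)/√|t|) in 𝔻_t. Moreover det(exp(θ·J_t)) = cos²(√|t|·θ) + sin²(√|t|·θ) = 1, so ‖e^{j_tθ}‖_t = 1, i.e. e^{j_tθ} lies in the unit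 subset 𝕋_t. -/
noncomputable section

open ComplexConjugate

/-- for `t < 0`, with `J_t = !![0, t; 1, 0]` (so `J_t² = t·I₂`), the
matrix exponential satisfies
`exp(θ J_t) = cos(√|t| θ)·I₂ + (sin(√|t| θ)/√|t|)·J_t`, explicitly the matrix with
rows `(cos(√|t| θ), −√|t| sin(√|t| θ))` and `(sin(√|t| θ)/√|t|, cos(√|t| θ))`; its
determinant is `cos² + sin² = 1`, so `e^{j_tθ} = (cos(√|t| θ), sin(√|t| θ)/√|t|)`
lies in `𝕋_t`. -/
theorem exp_jt_of_neg (t θ : ℝ) (ht : t < 0) (Jt : Matrix (Fin 2) (Fin 2) ℝ)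
    (hJ : Jt = !![0, t; 1, 0]) :
    Jt ^ 2 = t • (1 : Matrix (Fin 2) (Fin 2) ℝ) ∧
    NormedSpace.exp (θ • Jt) =
      Real.cos (Real.sqrt |t| * θ) • (1 : Matrix (Fin 2) (Fin 2) ℝ) +
        (Real.sin (Real.sqrt |t| * θ) / Real.sqrt |t|) • Jt ∧
    NormedSpace.exp (θ • Jt) =
      !![Real.cos (Real.sqrt |t| * θ), -(Real.sqrt |t| * Real.sin (Real.sqrt |t| * θ));
         Real.sin (Real.sqrt |t| * θ) / Real.sqrt |t|, Real.cos (Real.sqrt |t| * θ)] ∧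
    Matrix.det (NormedSpace.exp (θ • Jt)) = 1 ∧
    Real.cos (Real.sqrt |t| * θ) ^ 2 + Real.sin (Real.sqrt |t| * θ) ^ 2 = 1 ∧
    Real.sqrt |Real.cos (Real.sqrt |t| * θ) ^ 2 -
        t * (Real.sin (Real.sqrt |t| * θ) / Real.sqrt |t|) ^ 2| = 1 := by
  letI : SeminormedRing (Matrix (Fin 2) (Fin 2) ℝ) := Matrix.linftyOpSemiNormedRing
  letI : NormedRing (Matrix (Fin 2) (Fin 2) ℝ) := Matrix.linftyOpNormedRing
  letI : NormedAlgebra ℝ (Matrix (Fin 2) (Fin 2) ℝ) := Matrix.linftyOpNormedAlgebra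
  set s := Real.sqrt |t| with hs
  have hs0 : 0 < s := Real.sqrt_pos.2 (abs_pos.2 ht.ne)
  have hs2 : s ^ 2 = -t := by
    rw [hs, Real.sq_sqrt (abs_nonneg t), abs_of_neg ht]
  have hsq : Jt ^ 2 = t • (1 : Matrix (Fin 2) (Fin 2) ℝ) := by
    subst hJ
    ext i j
    fin_cases i <;> fin_cases j <;>
      simp [pow_two, Matrix.mul_apply, Fin.sum_univ_two, Matrix.one_apply]
  refine ⟨hsq, ?_⟩
  have hI' : (s⁻¹ • Jt) * (s⁻¹ • Jt) = -1 := by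
    rw [smul_mul_smul_comm, ← pow_two Jt, hsq, smul_smul]
    rw [show s⁻¹ * s⁻¹ * t = -1 by field_simp; linarith [hs2]]
    simp
  set φ := Complex.liftAux (s⁻¹ • Jt) hI' with hφ
  have hcont : Continuous φ := φ.toLinearMap.continuous_of_finiteDimensional
  have key : NormedSpace.exp (θ • Jt) =
      Real.cos (s * θ) • (1 : Matrix (Fin 2) (Fin 2) ℝ) + (Real.sin (s * θ) / s) • Jt := by
    have h1 : φ ((s * θ : ℝ) * Complex.I) = θ • Jt := by
      rw [show ((s * θ : ℝ) : ℂ) * Complex.I = (s * θ) • Complex.I from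
        Complex.real_smul.symm, map_smul, hφ, Complex.liftAux_apply_I, smul_smul]
      rw [show s * θ * s⁻¹ = θ by field_simp]
    have h2 : NormedSpace.exp ((s * θ : ℝ) * Complex.I) =
        Complex.exp ((s * θ : ℝ) * Complex.I) := by
      rw [Complex.exp_eq_exp_ℂ]
    calc NormedSpace.exp (θ • Jt) = φ (NormedSpace.exp ((s * θ : ℝ) * Complex.I)) := by
          rw [NormedSpace.map_exp φ hcont, h1]; rfl
      _ = φ (Complex.exp ((s * θ : ℝ) * Complex.I)) := by rw [h2]
      _ = _ := by
          rw [Complex.exp_mul_I, Complex.liftAux_apply]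
          simp only [Complex.add_re, Complex.add_im, Complex.mul_re, Complex.mul_im,
            Complex.I_re, Complex.I_im, Complex.cos_ofReal_re, Complex.cos_ofReal_im,
            Complex.sin_ofReal_re, Complex.sin_ofReal_im, mul_zero, mul_one, zero_mul,
            sub_zero, zero_sub, add_zero, zero_add, neg_zero, neg_neg,
            Algebra.algebraMap_eq_smul_one, smul_smul, div_eq_mul_inv]
  refine ⟨key, ?_, ?_, ?_, ?_⟩
  · rw [key, hJ]
    ext i j
    fin_cases i <;> fin_cases j <;>
      simp [Matrix.one_apply] <;>
      (rw [show t = -s ^ 2 by linarith]; field_simp)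
  · rw [key, hJ]
    have hd : (Real.cos (s*θ) • (1 : Matrix (Fin 2) (Fin 2) ℝ) +
        (Real.sin (s*θ) / s) • !![0, t; 1, 0]).det =
        Real.cos (s*θ) * Real.cos (s*θ) - (Real.sin (s*θ)/s * t) * (Real.sin (s*θ)/s) := by
      rw [Matrix.det_fin_two]
      simp [Matrix.one_apply]
    rw [hd, show t = -s ^ 2 by linarith]
    field_simp
    linear_combination Real.sin_sq_add_cos_sq (s * θ)
  · exact Real.cos_sq_add_sin_sq (s * θ)
  · have h1 : Real.cos (s*θ) ^ 2 - t * (Real.sin (s*θ) / s) ^ 2 = 1 := by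
      rw [show t = -s ^ 2 by linarith]
      field_simp
      linear_combination Real.sin_sq_add_cos_sq (s * θ)
    rw [h1]
    simp
end
end
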